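/- Let (Ω,μ) be a probability space, N ∈ ℕ with N ≥ 1, and let X^N be an N-dimensional linear subspace of real-valued measurable functions on Ω, each belonging to L_2(μ), such that |x(t)| ≤ β·√N·‖x‖_{L_2(μ)} for all t ∈ Ω and all x ∈ X^N, where β > 0. Then for every measurable set S ⊆ Ω there exists y ∈ X^N with ‖y‖_{L_2(μ)} = 1 and ∫_S |y(t)|^2 dμ(t) ≤ μ(S)·β^2. -/

import Mathlib

open MeasureTheory Set

private lemma int_mul {Ω : Type*} [MeasurableSpace Ω] {μ : Measure Ω} {f g : Ω → ℝ}
    (hf : MemLp f 2 μ) (hg : MemLp g 2 μ) : Integrable (fun s => f s * g s) μ := by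
  have h := (((hf.add hg).integrable_sq.sub hf.integrable_sq).sub hg.integrable_sq).div_const 2
  have he : (fun s => f s * g s) = fun s => (((f s + g s)^2 - f s^2) - g s^2)/2 := by
    ext s; ring
  rw [he]; exact h

theorem stmt14 {Ω : Type*} [MeasurableSpace Ω] (μ : Measure Ω) [IsProbabilityMeasure μ]
    (N : ℕ) (hN : 1 ≤ N) (X : Submodule ℝ (Ω → ℝ)) (hdim : Module.finrank ℝ X = N)
    (hmem : ∀ f ∈ X, Measurable f ∧ MemLp f 2 μ)
    (β : ℝ) (hβ : 0 < β)
    (hNik : ∀ f ∈ X, ∀ t : Ω,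
      |f t| ≤ β * Real.sqrt N * (∫ s, |f s| ^ 2 ∂μ) ^ ((1 : ℝ) / 2)) :
    ∀ S : Set Ω, MeasurableSet S →
      ∃ y ∈ X, (∫ s, |y s| ^ 2 ∂μ) ^ ((1 : ℝ) / 2) = 1 ∧
        ∫ s in S, |y s| ^ 2 ∂μ ≤ (μ S).toReal * β ^ 2 := by
  intro S hS
  -- |f|^2 = f*f pointwise rewriting helper
  have habs : ∀ f : Ω → ℝ, (∫ s, |f s| ^ 2 ∂μ) = ∫ s, f s * f s ∂μ := by
    intro f; congr 1; ext s; rw [sq_abs, sq]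
  -- the inner product core
  letI core : InnerProductSpace.Core ℝ X :=
  { inner := fun f g => ∫ s, f.1 s * g.1 s ∂μ
    conj_inner_symm := by
      intro x y
      show (starRingEnd ℝ) (∫ s, y.1 s * x.1 s ∂μ) = ∫ s, x.1 s * y.1 s ∂μ
      simp only [RCLike.conj_to_real]
      congr 1; ext s; ring
    re_inner_nonneg := by
      intro x
      show (0:ℝ) ≤ RCLike.re (∫ s, x.1 s * x.1 s ∂μ)
      simp only [RCLike.re_to_real]
      exact integral_nonneg fun s => mul_self_nonneg _
    definite := by
      intro x hx0
      have h0 : ∀ t, x.1 t = 0 := by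
        intro t
        have hx : (∫ s, x.1 s * x.1 s ∂μ) = 0 := hx0
        have := hNik x.1 x.2 t
        rw [habs, hx, Real.zero_rpow (by norm_num), mul_zero] at this
        exact abs_nonpos_iff.mp this
      ext t
      exact h0 t
    add_left := by
      intro x y z
      have hx := (hmem x.1 x.2).2
      have hy := (hmem y.1 y.2).2
      have hz := (hmem z.1 z.2).2
      show (∫ s, ((x + y : X)).1 s * z.1 s ∂μ)
          = (∫ s, x.1 s * z.1 s ∂μ) + ∫ s, y.1 s * z.1 s ∂μ
      have : (∫ s, ((x + y : X)).1 s * z.1 s ∂μ)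
          = ∫ s, (x.1 s * z.1 s + y.1 s * z.1 s) ∂μ := by
        congr 1; ext s
        simp [Submodule.coe_add]; ring
      rw [this, integral_add (int_mul hx hz) (int_mul hy hz)]
    smul_left := by
      intro x y r
      show (∫ s, ((r • x : X)).1 s * y.1 s ∂μ)
          = (starRingEnd ℝ) r * ∫ s, x.1 s * y.1 s ∂μ
      simp only [RCLike.conj_to_real]
      have : (∫ s, ((r • x : X)).1 s * y.1 s ∂μ) = ∫ s, r * (x.1 s * y.1 s) ∂μ := by
        congr 1; ext s
        simp [Submodule.coe_smul]; ring
      rw [this, integral_const_mul] }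
  letI : NormedAddCommGroup X := core.toNormedAddCommGroup
  letI : InnerProductSpace ℝ X := InnerProductSpace.ofCore core.toCore
  have hinner : ∀ x : X, (inner ℝ x x : ℝ) = ∫ s, x.1 s * x.1 s ∂μ := fun _ => rfl
  -- norm formula
  have hnorm : ∀ x : X, (∫ s, |x.1 s| ^ 2 ∂μ) ^ ((1 : ℝ) / 2) = ‖x‖ := by
    intro x
    rw [habs, ← hinner, real_inner_self_eq_norm_sq, ← Real.sqrt_eq_rpow,
      Real.sqrt_sq (norm_nonneg _)]
  haveI : FiniteDimensional ℝ X := FiniteDimensional.of_finrank_pos (by omega)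
  let b : OrthonormalBasis (Fin N) ℝ X :=
    (stdOrthonormalBasis ℝ X).reindex (finCongr (by rw [hdim]))
  -- pointwise bound on sum of squares
  have hpt : ∀ t : Ω, ∑ i : Fin N, (b i).1 t ^ 2 ≤ β ^ 2 * N := by
    intro t
    set g : X := ∑ i : Fin N, ((b i).1 t) • b i with hg
    have hgt : g.1 t = ∑ i : Fin N, (b i).1 t ^ 2 := by
      rw [hg]
      rw [Submodule.coe_sum]
      rw [Finset.sum_apply]
      congr 1; ext i
      simp [sq]
    have hgnorm : ‖g‖ ^ 2 = ∑ i : Fin N, (b i).1 t ^ 2 := by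
      rw [hg, ← real_inner_self_eq_norm_sq, b.orthonormal.inner_sum]
      simp [sq]
    set A : ℝ := ∑ i : Fin N, (b i).1 t ^ 2 with hA
    have hA0 : 0 ≤ A := Finset.sum_nonneg fun i _ => sq_nonneg _
    have hgn := hNik g.1 g.2 t
    rw [hnorm g, hgt] at hgn
    have hle : A ≤ β * Real.sqrt N * ‖g‖ := le_trans (le_abs_self _) hgn
    have hgA : ‖g‖ = Real.sqrt A := by
      rw [← Real.sqrt_sq (norm_nonneg g), hgnorm]
    rw [hgA] at hle
    rcases eq_or_lt_of_le hA0 with h0 | h0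
    · rw [← h0]; positivity
    · have hs : Real.sqrt A > 0 := Real.sqrt_pos.mpr h0
      have : A / Real.sqrt A ≤ β * Real.sqrt N := by
        rw [div_le_iff₀ hs] at *
        linarith
      rw [Real.div_sqrt] at this
      calc A = Real.sqrt A ^ 2 := (Real.sq_sqrt hA0).symm
        _ ≤ (β * Real.sqrt N) ^ 2 := by
            apply pow_le_pow_left₀ (Real.sqrt_nonneg _) this
        _ = β ^ 2 * N := by
            rw [mul_pow, Real.sq_sqrt (Nat.cast_nonneg N)]
  -- integrability of each square on S
  have hint : ∀ i : Fin N, IntegrableOn (fun s => (b i).1 s ^ 2) S μ := by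
    intro i
    exact ((hmem (b i).1 (b i).2).2.integrable_sq).integrableOn
  -- sum of set integrals bounded
  have hsum : ∑ i : Fin N, ∫ s in S, (b i).1 s ^ 2 ∂μ ≤ N * ((μ S).toReal * β ^ 2) := by
    rw [← integral_finset_sum _ (fun i _ => hint i)]
    have h1 : ∫ s in S, (∑ i : Fin N, (b i).1 s ^ 2) ∂μ ≤ ∫ _ in S, β ^ 2 * N ∂μ := by
      apply integral_mono (integrable_finset_sum _ fun i _ => hint i)
        (integrable_const _) (fun s => hpt s)
    calc _ ≤ ∫ _ in S, β ^ 2 * N ∂μ := h1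
      _ = (μ S).toReal * (β ^ 2 * N) := by
          rw [setIntegral_const, smul_eq_mul, measureReal_def]
      _ = N * ((μ S).toReal * β ^ 2) := by ring
  -- pick the minimal one
  have hex : ∃ i : Fin N, ∫ s in S, (b i).1 s ^ 2 ∂μ ≤ (μ S).toReal * β ^ 2 := by
    by_contra h
    push_neg at h
    have : (N : ℝ) * ((μ S).toReal * β ^ 2) < ∑ i : Fin N, ∫ s in S, (b i).1 s ^ 2 ∂μ := by
      calc (N : ℝ) * ((μ S).toReal * β ^ 2)
          = ∑ _i : Fin N, (μ S).toReal * β ^ 2 := by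
            rw [Finset.sum_const, Finset.card_univ, Fintype.card_fin, nsmul_eq_mul]
        _ < ∑ i : Fin N, ∫ s in S, (b i).1 s ^ 2 ∂μ := by
            apply Finset.sum_lt_sum_of_nonempty
            · exact Finset.univ_nonempty_iff.mpr ⟨⟨0, by omega⟩⟩
            · exact fun i _ => h i
    linarith [hsum]
  obtain ⟨i, hi⟩ := hex
  refine ⟨(b i).1, (b i).2, ?_, ?_⟩
  · rw [hnorm (b i), b.orthonormal.1 i]
  · simpa only [sq_abs] using hi
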